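/- Let C_0 be a linear code of length r over GF(q^m) with rank distribution A_i = #{c ∈ C_0 : rk(c) = i} (0 ≤ i ≤ r), let s ≥ 0, let B be an s × r matrix over GF(q), and let C_s = {(c,d) ∈ GF(q^m)^r × GF(q^m)^s : c − d·B ∈ C_0} be the s-th order B-elementary extension of C_0. Then for every u ≥ 0, the number of vectors of rank u in C_s equals Σ_{i=0}^{u} q^{i·s} · A_i · [s, u−i]_q · α(m−i, u−i); in particular this number does not depend on B. -/

import Mathlib

open Finset

/-- The rank of a vector `v` over the subfield `K`: the dimension over `K` of the
`K`-linear span of the coordinates of `v`. -/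
noncomputable def rk (K : Type*) {F : Type*} [Field K] [Field F] [Algebra K F]
    {ι : Type*} (v : ι → F) : ℕ :=
  Module.finrank K (Submodule.span K (Set.range v))

/-- `α(m,u) = ∏_{i=0}^{u-1} (q^m - q^i)`, with `q^m` the real power (integer exponent `m`). -/
noncomputable def alphaR (q : ℝ) (m : ℤ) (u : ℕ) : ℝ :=
  ∏ i ∈ Finset.range u, (q ^ m - q ^ (i : ℤ))

/-- Gaussian binomial `[n,u]_q = α(n,u)/α(u,u)` (which is `0` when `u > n`). -/
noncomputable def gaussR (q : ℝ) (n u : ℕ) : ℝ :=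
  alphaR q n u / alphaR q u u

/-! ### Algebraic identities -/

noncomputable def alphaN (q : ℝ) (n u : ℕ) : ℝ :=
  ∏ i ∈ Finset.range u, (q ^ n - q ^ i)

lemma alphaR_natCast (q : ℝ) (n u : ℕ) : alphaR q (n : ℤ) u = alphaN q n u := by
  unfold alphaR alphaN
  refine Finset.prod_congr rfl fun i _ => ?_
  rw [zpow_natCast, zpow_natCast]

lemma alphaR_zero (q : ℝ) (z : ℤ) : alphaR q z 0 = 1 := by simp [alphaR]

lemma alphaR_succ (q : ℝ) (z : ℤ) (u : ℕ) :
    alphaR q z (u + 1) = alphaR q z u * (q ^ z - q ^ (u : ℤ)) := by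
  simp [alphaR, Finset.prod_range_succ]

lemma alphaN_succ (q : ℝ) (n u : ℕ) :
    alphaN q n (u + 1) = alphaN q n u * (q ^ n - q ^ u) := Finset.prod_range_succ _ _

lemma alphaN_zero (q : ℝ) (n : ℕ) : alphaN q n 0 = 1 := by simp [alphaN]

lemma alphaN_pos {q : ℝ} (hq : 1 < q) {n u : ℕ} (h : u ≤ n) : 0 < alphaN q n u := by
  apply Finset.prod_pos
  intro i hi
  rw [Finset.mem_range] at hi
  have : q ^ i < q ^ n := pow_lt_pow_right₀ hq (lt_of_lt_of_le hi h)
  linarith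

lemma alphaN_diag_succ (q : ℝ) (t : ℕ) :
    alphaN q (t + 1) (t + 1) = q ^ t * (q ^ (t + 1) - 1) * alphaN q t t := by
  rw [alphaN, Finset.prod_range_succ' (fun i => q ^ (t + 1) - q ^ i)]
  have h1 : ∀ i : ℕ, q ^ (t + 1) - q ^ (i + 1) = q * (q ^ t - q ^ i) := by
    intro i; ring
  simp only [h1]
  rw [Finset.prod_mul_distrib, Finset.prod_const, ← alphaN, Finset.card_range]
  ring

lemma alphaN_pascal (q : ℝ) (s t : ℕ) :
    alphaN q (s + 1) (t + 1)
      = q ^ (t + 1) * alphaN q s (t + 1) + q ^ t * (q ^ (t + 1) - 1) * alphaN q s t := by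
  induction t with
  | zero => simp [alphaN_succ, alphaN_zero]; ring
  | succ t ih =>
      rw [alphaN_succ q (s+1) (t+1), ih, alphaN_succ q s (t+1), alphaN_succ q s t]
      ring

lemma gaussR_zero_right (q : ℝ) (n : ℕ) : gaussR q n 0 = 1 := by
  simp [gaussR, alphaR]

lemma gaussR_zero_left (q : ℝ) (k : ℕ) : gaussR q 0 (k + 1) = 0 := by
  have h : alphaR q ((0 : ℕ) : ℤ) (k + 1) = 0 := by
    rw [alphaR_natCast, alphaN]
    apply Finset.prod_eq_zero (Finset.mem_range.2 (Nat.succ_pos k))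
    simp
  simp only [gaussR]
  norm_cast at h ⊢
  rw [h, zero_div]

lemma gaussR_pascal {q : ℝ} (hq : 1 < q) (s t : ℕ) :
    gaussR q (s + 1) (t + 1) = q ^ (t + 1) * gaussR q s (t + 1) + gaussR q s t := by
  unfold gaussR
  simp only [alphaR_natCast]
  rw [alphaN_pascal, alphaN_diag_succ]
  have h2 : alphaN q t t ≠ 0 := ne_of_gt (alphaN_pos hq le_rfl)
  have h3 : alphaN q (t+1) (t+1) ≠ 0 := ne_of_gt (alphaN_pos hq le_rfl)
  have h4 : (0:ℝ) < q ^ t * (q ^ (t+1) - 1) := by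
    have h5 : (1:ℝ) < q ^ (t+1) := one_lt_pow₀ hq (Nat.succ_ne_zero t)
    have h6 := pow_pos (lt_trans one_pos hq) t
    nlinarith
  have h4' : q ^ t * (q ^ (t+1) - 1) ≠ 0 := ne_of_gt h4
  have h7 : q ^ (t+1) - 1 ≠ 0 := sub_ne_zero.2 (ne_of_gt (one_lt_pow₀ hq (Nat.succ_ne_zero t)))
  field_simp

/-- The key per-term identity used in the inductive step. -/
lemma key_term {q : ℝ} (hq : 1 < q) (m i t s : ℕ) (A : ℝ) :
    q ^ (i * (s+1)) * A * gaussR q (s+1) (t+1) * alphaR q ((m:ℤ) - i) (t+1)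
      = q ^ (i + t + 1) * (q ^ (i * s) * A * gaussR q s (t+1) * alphaR q ((m:ℤ) - i) (t+1))
        + (q ^ m - q ^ (i + t)) * (q ^ (i * s) * A * gaussR q s t * alphaR q ((m:ℤ) - i) t) := by
  have hqne : q ≠ 0 := ne_of_gt (lt_trans one_pos hq)
  have e : (q : ℝ) ^ (i : ℕ) * (q ^ ((m:ℤ) - i) - q ^ (t : ℤ)) = q ^ m - q ^ (i + t) := by
    rw [mul_sub, ← zpow_natCast q i, ← zpow_add₀ hqne, ← zpow_add₀ hqne]
    have e1 : (i : ℤ) + ((m:ℤ) - i) = (m : ℤ) := by ring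
    have e2 : (i : ℤ) + (t : ℤ) = ((i + t : ℕ) : ℤ) := by omega
    rw [e1, e2, zpow_natCast, zpow_natCast]
  have epow1 : q ^ (i * (s+1)) = q ^ (i * s) * q ^ i := by
    rw [← pow_add, Nat.mul_succ]
  have epow2 : q ^ (i + t + 1) = q ^ i * q ^ (t + 1) := by
    rw [← pow_add, Nat.add_assoc]
  rw [gaussR_pascal hq s t, alphaR_succ, epow1, epow2, ← e]
  ring

/-! ### Counting lemmas -/

section counting
variable {q m r : ℕ} {K F : Type*} [Field K] [Field F] [Algebra K F] [Fintype K] [Fintype F]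

lemma card_submodule (hK : Fintype.card K = q) (V : Submodule K F) :
    Nat.card V = q ^ Module.finrank K V := by
  have : Fintype V := Fintype.ofFinite _
  rw [Nat.card_eq_fintype_card, Module.card_eq_pow_finrank (K := K), hK]

lemma rk_le_finrank {ι : Type*} (v : ι → F) : rk K v ≤ Module.finrank K F :=
  Submodule.finrank_le _

lemma rk_eq_zero_iff {ι : Type*} (v : ι → F) : rk K v = 0 ↔ v = 0 := by
  unfold rk
  rw [Submodule.finrank_eq_zero, Submodule.span_eq_bot]
  constructor
  · intro h; funext i; exact h _ (Set.mem_range_self i)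
  · rintro rfl x ⟨i, rfl⟩; rfl

lemma finrank_sup_singleton_notmem {V : Submodule K F} {x : F} (hx : x ∉ V) :
    Module.finrank K ↥(V ⊔ Submodule.span K {x}) = Module.finrank K V + 1 := by
  have hx0 : x ≠ 0 := fun h => hx (h ▸ V.zero_mem)
  have hinf : V ⊓ Submodule.span K {x} = ⊥ := by
    rw [Submodule.eq_bot_iff]
    rintro y hy
    obtain ⟨hyV, hyx⟩ := Submodule.mem_inf.1 hy
    rw [Submodule.mem_span_singleton] at hyx
    obtain ⟨k, rfl⟩ := hyx
    rcases eq_or_ne k 0 with rfl | hk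
    · simp
    · exact absurd (by simpa [hk] using V.smul_mem k⁻¹ hyV) hx
  have h := Submodule.finrank_sup_add_finrank_inf_eq V (Submodule.span K {x})
  rw [hinf] at h
  simp [finrank_span_singleton hx0] at h
  omega

variable {s : ℕ}

lemma vecMul_succ_decomp (d : Fin (s+1) → F) (B : Matrix (Fin (s+1)) (Fin r) K) :
    Matrix.vecMul d (B.map (algebraMap K F))
      = d 0 • (B.map (algebraMap K F)) 0
        + Matrix.vecMul (Fin.tail d) ((B.submatrix Fin.succ id).map (algebraMap K F)) := by
  funext j
  simp [Matrix.vecMul, dotProduct, Fin.sum_univ_succ, Fin.tail, Matrix.submatrix,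
    Matrix.map]

open Submodule Set in
lemma span_elim_add (c' : Fin r → F) (M0 : Fin r → F)
    (hM0 : ∀ j, ∃ k : K, M0 j = algebraMap K F k) (d : Fin s → F) (x : F) :
    span K (range (Sum.elim (c' + x • M0) (Fin.cons x d))) =
      span K (range (Sum.elim c' d)) ⊔ span K {x} := by
  set V := span K (range (Sum.elim c' d)) with hV
  set W := span K ({x} : Set F) with hW
  have hxW : x ∈ W := subset_span rfl
  have hsmul : ∀ j, x * M0 j ∈ W := by
    intro j
    obtain ⟨k, hk⟩ := hM0 j
    have : x * M0 j = k • x := by rw [hk, Algebra.smul_def, mul_comm]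
    rw [this]
    exact W.smul_mem k hxW
  have hxL : x ∈ span K (range (Sum.elim (c' + x • M0) (Fin.cons x d))) :=
    subset_span ⟨Sum.inr 0, by simp⟩
  apply le_antisymm
  · rw [span_le]
    rintro v ⟨i, rfl⟩
    cases i with
    | inl j =>
        have h1 : c' j ∈ V ⊔ W := le_sup_left (α := Submodule K F)
          (subset_span ⟨Sum.inl j, rfl⟩)
        have h2 : x * M0 j ∈ V ⊔ W := le_sup_right (α := Submodule K F) (hsmul j)
        simpa using add_mem h1 h2
    | inr i =>
        rcases Fin.eq_zero_or_eq_succ i with rfl | ⟨i', rfl⟩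
        · simpa using le_sup_right (α := Submodule K F) hxW
        · simp only [Sum.elim_inr, Fin.cons_succ]
          exact le_sup_left (α := Submodule K F) (subset_span ⟨Sum.inr i', rfl⟩)
  · apply sup_le
    · rw [span_le]
      rintro v ⟨i, rfl⟩
      cases i with
      | inl j =>
          have h1 : (c' + x • M0) j ∈ span K (range (Sum.elim (c' + x • M0) (Fin.cons x d))) :=
            subset_span ⟨Sum.inl j, rfl⟩
          have h2 : x * M0 j ∈ span K (range (Sum.elim (c' + x • M0) (Fin.cons x d))) := by
            obtain ⟨k, hk⟩ := hM0 j
            have : x * M0 j = k • x := by rw [hk, Algebra.smul_def, mul_comm]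
            rw [this]
            exact smul_mem _ k hxL
          have := sub_mem h1 h2
          simpa using this
      | inr i =>
          exact subset_span ⟨Sum.inr i.succ, by simp⟩
    · rwa [span_singleton_le_iff_mem]

open Submodule Set Classical in
lemma rk_elim_add (c' : Fin r → F) (M0 : Fin r → F)
    (hM0 : ∀ j, ∃ k : K, M0 j = algebraMap K F k) (d : Fin s → F) (x : F) :
    rk K (Sum.elim (c' + x • M0) (Fin.cons x d))
      = if x ∈ span K (range (Sum.elim c' d)) then rk K (Sum.elim c' d)
        else rk K (Sum.elim c' d) + 1 := by
  unfold rk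
  rw [span_elim_add c' M0 hM0 d x]
  split_ifs with h
  · rw [sup_eq_left.2 (by rwa [Submodule.span_singleton_le_iff_mem])]
  · exact finrank_sup_singleton_notmem h

open Submodule Set in
lemma cnt_succ (hK : Fintype.card K = q) (hF : Fintype.card F = q ^ m)
    (C0 : Submodule F (Fin r → F)) (B : Matrix (Fin (s+1)) (Fin r) K) (u : ℕ) :
    Nat.card {p : (Fin r → F) × (Fin (s+1) → F) //
        p.1 - Matrix.vecMul p.2 (B.map (algebraMap K F)) ∈ C0 ∧
          rk K (Sum.elim p.1 p.2) = u + 1}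
      = q ^ (u+1) * Nat.card {p : (Fin r → F) × (Fin s → F) //
          p.1 - Matrix.vecMul p.2 ((B.submatrix Fin.succ id).map (algebraMap K F)) ∈ C0 ∧
            rk K (Sum.elim p.1 p.2) = u + 1}
        + (q ^ m - q ^ u) * Nat.card {p : (Fin r → F) × (Fin s → F) //
          p.1 - Matrix.vecMul p.2 ((B.submatrix Fin.succ id).map (algebraMap K F)) ∈ C0 ∧
            rk K (Sum.elim p.1 p.2) = u} := by
  classical
  set M : Matrix (Fin (s+1)) (Fin r) F := B.map (algebraMap K F) with hM
  set M' : Matrix (Fin s) (Fin r) F := (B.submatrix Fin.succ id).map (algebraMap K F) with hM'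
  have hM0 : ∀ j, ∃ k : K, M 0 j = algebraMap K F k := fun j => ⟨B 0 j, rfl⟩
  set π : ((Fin r → F) × (Fin (s+1) → F)) → ((Fin r → F) × (Fin s → F)) :=
    fun p => (p.1 - p.2 0 • M 0, Fin.tail p.2) with hπ
  set P : Finset ((Fin r → F) × (Fin (s+1) → F)) :=
    univ.filter (fun p => p.1 - Matrix.vecMul p.2 M ∈ C0 ∧ rk K (Sum.elim p.1 p.2) = u + 1)
    with hP
  set Q : Finset ((Fin r → F) × (Fin s → F)) :=
    univ.filter (fun p => p.1 - Matrix.vecMul p.2 M' ∈ C0) with hQ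
  have hmem : ∀ p : (Fin r → F) × (Fin (s+1) → F),
      p.1 - Matrix.vecMul p.2 M = (p.1 - p.2 0 • M 0) - Matrix.vecMul (Fin.tail p.2) M' := by
    intro p
    rw [vecMul_succ_decomp p.2 B, sub_sub]
  have h2 : ∀ p ∈ P, π p ∈ Q := by
    intro p hp
    rw [hP, Finset.mem_filter] at hp
    rw [hQ, Finset.mem_filter]
    refine ⟨Finset.mem_univ _, ?_⟩
    have := hp.2.1
    rwa [hmem p] at this
  have h3 : P.card = ∑ p' ∈ Q, (P.filter fun p => π p = p').card :=
    Finset.card_eq_sum_card_fiberwise h2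
  have h4 : ∀ p' ∈ Q, (P.filter fun p => π p = p').card
      = (if rk K (Sum.elim p'.1 p'.2) = u + 1 then q ^ (u+1)
         else if rk K (Sum.elim p'.1 p'.2) = u then q ^ m - q ^ u else 0) := by
    intro p' hp'
    rw [hQ, Finset.mem_filter] at hp'
    obtain ⟨-, hp'mem⟩ := hp'
    set Sx : Finset F := univ.filter
      (fun x => rk K (Sum.elim (p'.1 + x • M 0) (Fin.cons x p'.2)) = u + 1) with hSx
    have hcard : (P.filter fun p => π p = p').card = Sx.card := by
      refine Finset.card_bij' (fun p _ => p.2 0)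
        (fun x _ => (p'.1 + x • M 0, Fin.cons x p'.2)) ?hi ?hj ?left ?right
      case hi =>
        intro p hp
        rw [Finset.mem_filter] at hp
        obtain ⟨hpP, hπp⟩ := hp
        rw [hP, Finset.mem_filter] at hpP
        have e1 : p'.1 + p.2 0 • M 0 = p.1 := by
          rw [← hπp]; exact sub_add_cancel _ _
        have e2 : Fin.cons (p.2 0) p'.2 = p.2 := by
          rw [← hπp]; exact Fin.cons_self_tail _
        rw [hSx, Finset.mem_filter]
        refine ⟨Finset.mem_univ _, ?_⟩
        rw [e1, e2]
        exact hpP.2.2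
      case hj =>
        intro x hx
        rw [hSx, Finset.mem_filter] at hx
        rw [Finset.mem_filter]
        constructor
        · rw [hP, Finset.mem_filter]
          refine ⟨Finset.mem_univ _, ?_, hx.2⟩
          have := hmem (p'.1 + x • M 0, Fin.cons x p'.2)
          rw [this]
          simp only [Fin.cons_zero, Fin.tail_cons]
          rw [add_sub_cancel_right]
          exact hp'mem
        · simp only [hπ, Fin.cons_zero, Fin.tail_cons, add_sub_cancel_right]
      case left =>
        intro p hp
        rw [Finset.mem_filter] at hp
        obtain ⟨-, hπp⟩ := hp
        have e1 : p'.1 + p.2 0 • M 0 = p.1 := by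
          rw [← hπp]; exact sub_add_cancel _ _
        have e2 : Fin.cons (p.2 0) p'.2 = p.2 := by
          rw [← hπp]; exact Fin.cons_self_tail _
        rw [e1, e2]
      case right =>
        intro x hx
        simp
    rw [hcard]
    have hrkx : ∀ x : F, rk K (Sum.elim (p'.1 + x • M 0) (Fin.cons x p'.2))
        = if x ∈ span K (range (Sum.elim p'.1 p'.2)) then rk K (Sum.elim p'.1 p'.2)
          else rk K (Sum.elim p'.1 p'.2) + 1 := fun x => rk_elim_add p'.1 (M 0) hM0 p'.2 x
    by_cases hc1 : rk K (Sum.elim p'.1 p'.2) = u + 1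
    · rw [if_pos hc1]
      have hSeq : Sx = univ.filter (fun x => x ∈ span K (range (Sum.elim p'.1 p'.2))) := by
        apply Finset.filter_congr
        intro x _
        rw [hrkx x]
        by_cases hxV : x ∈ span K (range (Sum.elim p'.1 p'.2))
        · rw [if_pos hxV]
          exact iff_of_true hc1 hxV
        · rw [if_neg hxV]
          refine iff_of_false (fun h => ?_) hxV
          rw [hc1] at h
          exact Nat.succ_ne_self (u+1) (by omega)
      rw [hSeq]
      rw [← Fintype.card_subtype]
      have hcc : Fintype.card {x // x ∈ span K (range (Sum.elim p'.1 p'.2))}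
          = Nat.card (span K (range (Sum.elim p'.1 p'.2))) := by
        rw [Nat.card_eq_fintype_card]
      rw [hcc, card_submodule hK, ← hc1]
      rfl
    · rw [if_neg hc1]
      by_cases hc2 : rk K (Sum.elim p'.1 p'.2) = u
      · rw [if_pos hc2]
        have hSeq : Sx = univ.filter (fun x => x ∉ span K (range (Sum.elim p'.1 p'.2))) := by
          apply Finset.filter_congr
          intro x _
          rw [hrkx x]
          by_cases hxV : x ∈ span K (range (Sum.elim p'.1 p'.2))
          · rw [if_pos hxV]
            exact iff_of_false hc1 (not_not_intro hxV)
          · rw [if_neg hxV]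
            exact iff_of_true (by rw [hc2]) hxV
        rw [hSeq, ← Fintype.card_subtype]
        rw [Fintype.card_subtype_compl, hF]
        congr 1
        have hcc : Fintype.card {x // x ∈ span K (range (Sum.elim p'.1 p'.2))}
            = Nat.card (span K (range (Sum.elim p'.1 p'.2))) := by
          rw [Nat.card_eq_fintype_card]
        rw [hcc, card_submodule hK, ← hc2]
        rfl
      · rw [if_neg hc2]
        have hSeq : Sx = ∅ := by
          rw [hSx, Finset.filter_eq_empty_iff]
          intro x _
          rw [hrkx x]
          by_cases hxV : x ∈ span K (range (Sum.elim p'.1 p'.2))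
          · rw [if_pos hxV]; exact hc1
          · rw [if_neg hxV]
            intro h
            exact hc2 (Nat.succ_injective h)
        rw [hSeq, Finset.card_empty]
  have h6 : ∀ j : ℕ, (Q.filter fun p' => rk K (Sum.elim p'.1 p'.2) = j).card
      = Nat.card {p : (Fin r → F) × (Fin s → F) //
          p.1 - Matrix.vecMul p.2 M' ∈ C0 ∧ rk K (Sum.elim p.1 p.2) = j} := by
    intro j
    rw [Nat.card_eq_fintype_card, Fintype.card_subtype, hQ, Finset.filter_filter]
  have hLHS : Nat.card {p : (Fin r → F) × (Fin (s+1) → F) //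
      p.1 - Matrix.vecMul p.2 M ∈ C0 ∧ rk K (Sum.elim p.1 p.2) = u + 1} = P.card := by
    rw [Nat.card_eq_fintype_card, Fintype.card_subtype]
  rw [hLHS, h3, Finset.sum_congr rfl h4]
  have hsplit : ∀ p' : (Fin r → F) × (Fin s → F),
      (if rk K (Sum.elim p'.1 p'.2) = u + 1 then q ^ (u+1)
         else if rk K (Sum.elim p'.1 p'.2) = u then q ^ m - q ^ u else 0)
      = (if rk K (Sum.elim p'.1 p'.2) = u + 1 then q ^ (u+1) else 0)
        + (if rk K (Sum.elim p'.1 p'.2) = u then q ^ m - q ^ u else 0) := by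
    intro p'
    by_cases hc1 : rk K (Sum.elim p'.1 p'.2) = u + 1 <;>
      by_cases hc2 : rk K (Sum.elim p'.1 p'.2) = u <;> simp [hc1, hc2] <;> omega
  rw [Finset.sum_congr rfl (fun p' _ => hsplit p'), Finset.sum_add_distrib]
  rw [← Finset.sum_filter, ← Finset.sum_filter, Finset.sum_const, Finset.sum_const,
    smul_eq_mul, smul_eq_mul, h6, h6, mul_comm, mul_comm (Nat.card _)]

/-- Base case: `s = 0`. -/
lemma cnt_zero (C0 : Submodule F (Fin r → F)) (B : Matrix (Fin 0) (Fin r) K) (u : ℕ) :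
    Nat.card {p : (Fin r → F) × (Fin 0 → F) //
        p.1 - Matrix.vecMul p.2 (B.map (algebraMap K F)) ∈ C0 ∧
          rk K (Sum.elim p.1 p.2) = u}
      = Nat.card {c : Fin r → F // c ∈ C0 ∧ rk K c = u} := by
  have hvm : ∀ d : Fin 0 → F, Matrix.vecMul d (B.map (algebraMap K F)) = 0 := by
    intro d; funext j; simp [Matrix.vecMul, dotProduct]
  have hrk : ∀ (c : Fin r → F) (d : Fin 0 → F), rk K (Sum.elim c d) = rk K c := by
    intro c d
    unfold rk
    rw [Set.Sum.elim_range, Set.range_eq_empty d, Set.union_empty]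
  apply Nat.card_congr
  refine ⟨fun p => ⟨p.1.1, ?_, ?_⟩, fun c => ⟨(c.1, fun i => i.elim0), ?_, ?_⟩, ?_, ?_⟩
  · have := p.2.1; rwa [hvm, sub_zero] at this
  · have := p.2.2; rwa [hrk] at this
  · rw [hvm, sub_zero]; exact c.2.1
  · rw [hrk]; exact c.2.2
  · rintro ⟨⟨c, d⟩, h⟩
    apply Subtype.ext
    show (c, fun i => i.elim0) = (c, d)
    exact congrArg (Prod.mk c) (Subsingleton.elim _ _)
  · intro c
    apply Subtype.ext
    rfl

/-- The rank-0 count is 1. -/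
lemma cnt_rank_zero (C0 : Submodule F (Fin r → F)) (B : Matrix (Fin s) (Fin r) K) :
    Nat.card {p : (Fin r → F) × (Fin s → F) //
        p.1 - Matrix.vecMul p.2 (B.map (algebraMap K F)) ∈ C0 ∧
          rk K (Sum.elim p.1 p.2) = 0} = 1 := by
  classical
  have hiff : ∀ p : (Fin r → F) × (Fin s → F),
      (p.1 - Matrix.vecMul p.2 (B.map (algebraMap K F)) ∈ C0 ∧ rk K (Sum.elim p.1 p.2) = 0)
        ↔ p = 0 := by
    intro p
    constructor
    · rintro ⟨hmem, hrk⟩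
      rw [rk_eq_zero_iff] at hrk
      have h1 : p.1 = 0 := by funext j; exact congrFun hrk (Sum.inl j)
      have h2 : p.2 = 0 := by funext i; exact congrFun hrk (Sum.inr i)
      exact Prod.ext h1 h2
    · rintro rfl
      constructor
      · simp [Matrix.vecMul_zero]
      · rw [rk_eq_zero_iff]
        funext i; cases i <;> rfl
  rw [Nat.card_congr (Equiv.subtypeEquivRight hiff), Nat.card_eq_fintype_card,
    Fintype.card_subtype_eq]

/-- The rank-0 count of the code itself is 1. -/
lemma code_rank_zero (C0 : Submodule F (Fin r → F)) :
    Nat.card {c : Fin r → F // c ∈ C0 ∧ rk K c = 0} = 1 := by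
  classical
  have hiff : ∀ c : Fin r → F, (c ∈ C0 ∧ rk K c = 0) ↔ c = 0 := by
    intro c
    constructor
    · rintro ⟨-, hrk⟩; rwa [rk_eq_zero_iff] at hrk
    · rintro rfl; exact ⟨C0.zero_mem, by rw [rk_eq_zero_iff]⟩
  rw [Nat.card_congr (Equiv.subtypeEquivRight hiff), Nat.card_eq_fintype_card,
    Fintype.card_subtype_eq]

lemma cnt_high_rank (hq2 : 2 ≤ q) (hK : Fintype.card K = q) (hF : Fintype.card F = q ^ m)
    (C0 : Submodule F (Fin r → F)) (B : Matrix (Fin s) (Fin r) K) {u : ℕ} (hu : m < u) :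
    Nat.card {p : (Fin r → F) × (Fin s → F) //
        p.1 - Matrix.vecMul p.2 (B.map (algebraMap K F)) ∈ C0 ∧
          rk K (Sum.elim p.1 p.2) = u} = 0 := by
  have hfr : Module.finrank K F = m := by
    have h := Module.card_eq_pow_finrank (K := K) (V := F)
    rw [hK, hF] at h
    exact (Nat.pow_right_injective hq2 h.symm)
  have : IsEmpty {p : (Fin r → F) × (Fin s → F) //
      p.1 - Matrix.vecMul p.2 (B.map (algebraMap K F)) ∈ C0 ∧
        rk K (Sum.elim p.1 p.2) = u} := by
    refine ⟨fun p => ?_⟩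
    have := rk_le_finrank (K := K) (Sum.elim p.1.1 p.1.2)
    rw [hfr, p.2.2] at this
    omega
  exact Nat.card_of_isEmpty

end counting

/-- The Pascal-type identity for the right-hand side sums. -/
lemma rhs_pascal {q : ℝ} (hq : 1 < q) (m s u : ℕ) (A : ℕ → ℝ) :
    ∑ i ∈ Finset.range (u+2),
        q ^ (i*(s+1)) * A i * gaussR q (s+1) (u+1-i) * alphaR q ((m:ℤ) - i) (u+1-i)
      = q ^ (u+1) * ∑ i ∈ Finset.range (u+2),
            q ^ (i*s) * A i * gaussR q s (u+1-i) * alphaR q ((m:ℤ) - i) (u+1-i)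
        + (q ^ m - q ^ u) * ∑ i ∈ Finset.range (u+1),
            q ^ (i*s) * A i * gaussR q s (u-i) * alphaR q ((m:ℤ) - i) (u-i) := by
  have hterm : ∀ i ∈ Finset.range (u+1),
      q ^ (i*(s+1)) * A i * gaussR q (s+1) (u+1-i) * alphaR q ((m:ℤ) - i) (u+1-i)
        = q ^ (u+1) * (q ^ (i*s) * A i * gaussR q s (u+1-i) * alphaR q ((m:ℤ) - i) (u+1-i))
          + (q ^ m - q ^ u) * (q ^ (i*s) * A i * gaussR q s (u-i) * alphaR q ((m:ℤ) - i) (u-i))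
      := by
    intro i hi
    rw [Finset.mem_range] at hi
    have h1 : u + 1 - i = (u - i) + 1 := by omega
    have h2 : i + (u - i) = u := by omega
    rw [h1, key_term hq m i (u-i) s (A i), h2]
  have hlast : q ^ ((u+1)*(s+1)) * A (u+1) * gaussR q (s+1) (u+1-(u+1))
        * alphaR q ((m:ℤ) - ((u+1 : ℕ) : ℤ)) (u+1-(u+1))
      = q ^ (u+1) * (q ^ ((u+1)*s) * A (u+1) * gaussR q s (u+1-(u+1))
          * alphaR q ((m:ℤ) - ((u+1 : ℕ) : ℤ)) (u+1-(u+1))) := by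
    simp only [Nat.sub_self, gaussR_zero_right, alphaR_zero]
    have h3 : (u+1)*(s+1) = (u+1) + (u+1)*s := by ring
    rw [h3, pow_add]
    ring
  rw [Finset.sum_range_succ, Finset.sum_range_succ
    (fun i => q ^ (i*s) * A i * gaussR q s (u+1-i) * alphaR q ((m:ℤ) - i) (u+1-i)),
    Finset.sum_congr rfl hterm, hlast, Finset.sum_add_distrib, ← Finset.mul_sum,
    ← Finset.mul_sum]
  ring

section main
variable {q m r : ℕ} {K F : Type*} [Field K] [Field F] [Algebra K F] [Fintype K] [Fintype F]

theorem count_aux (hq2 : 2 ≤ q) (hK : Fintype.card K = q) (hF : Fintype.card F = q ^ m)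
    (C0 : Submodule F (Fin r → F)) :
    ∀ (s : ℕ) (B : Matrix (Fin s) (Fin r) K) (u : ℕ),
    (Nat.card {p : (Fin r → F) × (Fin s → F) //
        p.1 - Matrix.vecMul p.2 (B.map (algebraMap K F)) ∈ C0 ∧
          rk K (Sum.elim p.1 p.2) = u} : ℝ)
      = ∑ i ∈ Finset.range (u + 1),
          (q : ℝ) ^ (i * s) * (Nat.card {c : Fin r → F // c ∈ C0 ∧ rk K c = i} : ℝ) *
            gaussR (q : ℝ) s (u - i) * alphaR (q : ℝ) ((m : ℤ) - i) (u - i) := by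
  have hq1 : (1 : ℝ) < (q : ℝ) := by
    have : (2:ℝ) ≤ (q:ℝ) := by exact_mod_cast hq2
    linarith
  intro s
  induction s with
  | zero =>
      intro B u
      rw [cnt_zero C0 B u]
      rw [Finset.sum_eq_single_of_mem u (Finset.self_mem_range_succ u)]
      · rw [Nat.sub_self, gaussR_zero_right, alphaR_zero, Nat.mul_zero, pow_zero]
        ring
      · intro i hi hne
        rw [Finset.mem_range] at hi
        have h1 : u - i = (u - i - 1) + 1 := by omega
        rw [h1, gaussR_zero_left]
        ring
  | succ s ih =>
      intro B u
      cases u with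
      | zero =>
          rw [cnt_rank_zero C0 B, Finset.sum_range_one, code_rank_zero C0,
            gaussR_zero_right]
          have : alphaR (q:ℝ) ((m:ℤ) - (0:ℕ)) (0 - 0) = 1 := alphaR_zero _ _
          rw [this]
          norm_num
      | succ u =>
          rw [cnt_succ hK hF C0 B u, Nat.cast_add, Nat.cast_mul, Nat.cast_mul, Nat.cast_pow]
          rw [ih (B.submatrix Fin.succ id) (u+1)]
          by_cases hum : u ≤ m
          · have hc : ((q^m - q^u : ℕ) : ℝ) = (q:ℝ)^m - (q:ℝ)^u := by
              rw [Nat.cast_sub (Nat.pow_le_pow_right (by omega) hum)]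
              push_cast
              rfl
            rw [hc, ih (B.submatrix Fin.succ id) u]
            exact (rhs_pascal hq1 m s u _).symm
          · have h0 : Nat.card {p : (Fin r → F) × (Fin s → F) //
                p.1 - Matrix.vecMul p.2 ((B.submatrix Fin.succ id).map (algebraMap K F)) ∈ C0 ∧
                  rk K (Sum.elim p.1 p.2) = u} = 0 :=
              cnt_high_rank hq2 hK hF C0 _ (by omega)
            have h0' : ∑ i ∈ Finset.range (u + 1),
                (q : ℝ) ^ (i * s) * (Nat.card {c : Fin r → F // c ∈ C0 ∧ rk K c = i} : ℝ) *
                  gaussR (q : ℝ) s (u - i) * alphaR (q : ℝ) ((m : ℤ) - i) (u - i) = 0 := by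
              rw [← ih (B.submatrix Fin.succ id) u, h0, Nat.cast_zero]
            rw [h0, Nat.cast_zero, mul_zero, add_zero]
            have := rhs_pascal hq1 m s u
              (fun i => (Nat.card {c : Fin r → F // c ∈ C0 ∧ rk K c = i} : ℝ))
            rw [this, h0', mul_zero, add_zero]
  done

end main


/-- if `C_0 ⊆ GF(q^m)^r` is a linear code with rank distribution `A_i`,
then the number of vectors of rank `u` in its `s`-th order `B`-elementary extension
`C_s = {(c,d) : c - d·B ∈ C_0}` equals `Σ_{i=0}^u q^{i·s} A_i [s,u-i]_q α(m-i,u-i)`;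
in particular it does not depend on `B`. -/
theorem rank_enumerator_elementary_extension (q m r : ℕ) (hq : IsPrimePow q)
    (hm : 0 < m) (hr : 0 < r)
    (K F : Type*) [Field K] [Field F] [Algebra K F] [Fintype K] [Fintype F]
    (hK : Fintype.card K = q) (hF : Fintype.card F = q ^ m)
    (C0 : Submodule F (Fin r → F)) (s : ℕ) (B : Matrix (Fin s) (Fin r) K) (u : ℕ) :
    (Nat.card {p : (Fin r → F) × (Fin s → F) //
        p.1 - Matrix.vecMul p.2 (B.map (algebraMap K F)) ∈ C0 ∧
          rk K (Sum.elim p.1 p.2) = u} : ℝ) =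
      ∑ i ∈ Finset.range (u + 1),
        (q : ℝ) ^ (i * s) * (Nat.card {c : Fin r → F // c ∈ C0 ∧ rk K c = i} : ℝ) *
          gaussR (q : ℝ) s (u - i) * alphaR (q : ℝ) ((m : ℤ) - i) (u - i) := by
  exact count_aux hq.two_le hK hF C0 s B u
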